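/- Let (X, d) be a complete generalized metric space (d may take the value ∞) and F : X → X a strictly contractive mapping with Lipschitz constant 0 < L < 1. Then for each x ∈ X, either d(Fⁿ(x), Fⁿ⁺¹(x)) = ∞ for all n ≥ 0, or there exists n₀ such that d(Fⁿ(x), Fⁿ⁺¹(x)) < ∞ for all n ≥ n₀, the sequence (Fⁿ(x)) converges to a fixed point y* of F which is the unique fixed point of F in Y = {y : d(F^{n₀}(x), y) < ∞}, and d(y, y*) ≤ d(y, F(y))/(1 − L) for all y ∈ Y. -/

import Mathlib

open Filter Topology

theorem stmt18 {Y : Type*} (d : Y → Y → ENNReal)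
    (hd0 : ∀ a b : Y, d a b = 0 ↔ a = b)
    (hdsymm : ∀ a b : Y, d a b = d b a)
    (hdtri : ∀ a b c : Y, d a c ≤ d a b + d b c)
    (hcomplete : ∀ u : ℕ → Y,
      (∀ ε : ENNReal, 0 < ε → ∃ N : ℕ, ∀ m n : ℕ, N ≤ m → N ≤ n → d (u m) (u n) < ε) →
      ∃ l : Y, ∀ ε : ENNReal, 0 < ε → ∃ N : ℕ, ∀ n : ℕ, N ≤ n → d (u n) l < ε)
    (F : Y → Y) (L : ℝ) (hL0 : 0 < L) (hL1 : L < 1)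
    (hF : ∀ a b : Y, d (F a) (F b) ≤ ENNReal.ofReal L * d a b) :
    ∀ x : Y, (∀ n : ℕ, d (F^[n] x) (F^[n+1] x) = ⊤) ∨
      ∃ n₀ : ℕ, (∀ n : ℕ, n₀ ≤ n → d (F^[n] x) (F^[n+1] x) < ⊤) ∧
        ∃ y : Y, F y = y ∧
          (∀ ε : ENNReal, 0 < ε → ∃ N : ℕ, ∀ n : ℕ, N ≤ n → d (F^[n] x) y < ε) ∧
          (∀ y' : Y, F y' = y' → d (F^[n₀] x) y' < ⊤ → y' = y) ∧
          (∀ z : Y, d (F^[n₀] x) z < ⊤ → d z y ≤ ENNReal.ofReal (1 / (1 - L)) * d z (F z)) := by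
  intro x
  by_cases hall : ∀ n : ℕ, d (F^[n] x) (F^[n+1] x) = ⊤
  · exact Or.inl hall
  push_neg at hall
  obtain ⟨n₀, hn₀⟩ := hall
  right
  refine ⟨n₀, ?_⟩
  set l : ENNReal := ENNReal.ofReal L with hl
  have hl1 : l < 1 := by
    rw [hl, ← ENNReal.ofReal_one]
    exact ENNReal.ofReal_lt_ofReal_iff_of_nonneg hL0.le |>.mpr hL1
  have hlt : l ≠ ⊤ := ENNReal.ofReal_ne_top
  have hle1 : l ≤ 1 := hl1.le
  -- iterate contraction
  have hiter : ∀ (k : ℕ) (a b : Y), d (F^[k] a) (F^[k] b) ≤ l ^ k * d a b := by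
    intro k
    induction k with
    | zero => intro a b; simp
    | succ k ih =>
      intro a b
      calc d (F^[k+1] a) (F^[k+1] b) = d (F (F^[k] a)) (F (F^[k] b)) := by
            simp [Function.iterate_succ_apply']
        _ ≤ l * d (F^[k] a) (F^[k] b) := hF _ _
        _ ≤ l * (l ^ k * d a b) := by gcongr; exact ih a b
        _ = l ^ (k+1) * d a b := by ring
  set C : ENNReal := d (F^[n₀] x) (F^[n₀+1] x) with hC
  have hDk : ∀ k : ℕ, d (F^[n₀+k] x) (F^[n₀+k+1] x) ≤ l ^ k * C := by
    intro k
    have e1 : F^[n₀+k] x = F^[k] (F^[n₀] x) := by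
      rw [add_comm, Function.iterate_add_apply]
    have e2 : F^[n₀+k+1] x = F^[k] (F^[n₀+1] x) := by
      rw [show n₀+k+1 = k+(n₀+1) by omega, Function.iterate_add_apply]
    rw [e1, e2]; exact hiter k _ _
  have hgeo : ∀ (a : Y) (j : ℕ), d a (F^[j] a) ≤ (1 - l)⁻¹ * d a (F a) := by
    intro a j
    have hstep : ∀ i : ℕ, d (F^[i] a) (F^[i+1] a) ≤ l ^ i * d a (F a) := by
      intro i
      have h := hiter i a (F a)
      rwa [(Function.iterate_succ_apply F i a).symm] at h
    have hsum : d a (F^[j] a) ≤ (∑ i ∈ Finset.range j, l ^ i) * d a (F a) := by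
      induction j with
      | zero => simpa using (hd0 a a).mpr rfl
      | succ j ih =>
        calc d a (F^[j+1] a) ≤ d a (F^[j] a) + d (F^[j] a) (F^[j+1] a) := hdtri _ _ _
          _ ≤ (∑ i ∈ Finset.range j, l ^ i) * d a (F a) + l ^ j * d a (F a) :=
            add_le_add ih (hstep j)
          _ = (∑ i ∈ Finset.range (j+1), l ^ i) * d a (F a) := by
            rw [Finset.sum_range_succ, add_mul]
    refine hsum.trans ?_
    gcongr
    calc (∑ i ∈ Finset.range j, l ^ i) ≤ ∑' i : ℕ, l ^ i := ENNReal.sum_le_tsum _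
      _ = (1 - l)⁻¹ := ENNReal.tsum_geometric l
  have hmn : ∀ m j : ℕ, d (F^[n₀+m] x) (F^[n₀+m+j] x) ≤ (1 - l)⁻¹ * (l ^ m * C) := by
    intro m j
    have e2 : F^[n₀+m+j] x = F^[j] (F^[n₀+m] x) := by
      rw [show n₀+m+j = j+(n₀+m) by omega, Function.iterate_add_apply]
    have e3 : F (F^[n₀+m] x) = F^[n₀+m+1] x := (Function.iterate_succ_apply' F _ x).symm
    rw [e2]
    refine (hgeo _ j).trans ?_
    rw [e3]
    gcongr
    exact hDk m
  have hsub_ne : (1 : ENNReal) - l ≠ 0 := by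
    simpa [tsub_eq_zero_iff_le] using not_le.mpr hl1
  have hinv_ne : ((1 : ENNReal) - l)⁻¹ ≠ ⊤ := ENNReal.inv_ne_top.mpr hsub_ne
  set K : ENNReal := (1 - l)⁻¹ * C with hK
  have hKne : K ≠ ⊤ := ENNReal.mul_ne_top hinv_ne hn₀
  have hclose : ∀ m n : ℕ, n₀ ≤ m → m ≤ n →
      d (F^[m] x) (F^[n] x) ≤ K * l ^ (m - n₀) := by
    intro m n hm hmn'
    obtain ⟨m', rfl⟩ := Nat.exists_eq_add_of_le hm
    obtain ⟨j, rfl⟩ := Nat.exists_eq_add_of_le hmn'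
    have := hmn m' j
    calc d (F^[n₀+m'] x) (F^[n₀+m'+j] x) ≤ (1 - l)⁻¹ * (l ^ m' * C) := this
      _ = K * l ^ m' := by rw [hK]; ring
      _ = K * l ^ (n₀ + m' - n₀) := by rw [show n₀ + m' - n₀ = m' by omega]
  have htendK : Tendsto (fun k : ℕ => K * l ^ k) atTop (𝓝 0) := by
    have h0 : Tendsto (fun k : ℕ => l ^ k) atTop (𝓝 0) :=
      ENNReal.tendsto_pow_atTop_nhds_zero_of_lt_one hl1
    simpa using ENNReal.Tendsto.const_mul h0 (Or.inr hKne)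
  have hcauchy : ∀ ε : ENNReal, 0 < ε → ∃ N : ℕ, ∀ m n : ℕ, N ≤ m → N ≤ n →
      d (F^[m] x) (F^[n] x) < ε := by
    intro ε hε
    have : ∀ᶠ k in atTop, K * l ^ k < ε := htendK.eventually (gt_mem_nhds hε)
    obtain ⟨N', hN'⟩ := this.exists_forall_of_atTop
    refine ⟨n₀ + N', fun m n hm hn => ?_⟩
    rcases le_total m n with h | h
    · exact lt_of_le_of_lt (hclose m n (by omega) h) (hN' _ (by omega))
    · rw [hdsymm]
      exact lt_of_le_of_lt (hclose n m (by omega) h) (hN' _ (by omega))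
  obtain ⟨y, hy⟩ := hcomplete (fun n => F^[n] x) hcauchy
  have hfix : F y = y := by
    rw [← hd0]
    by_contra hne
    have hpos : 0 < d (F y) y := pos_iff_ne_zero.mpr hne
    set ε := d (F y) y with hε
    have hhalf : 0 < ε / 2 := ENNReal.div_pos hpos.ne' (by norm_num)
    obtain ⟨N, hN⟩ := hy (ε / 2) hhalf
    have h1 : d (F y) (F^[N+1] x) < ε / 2 := by
      have : d (F y) (F^[N+1] x) ≤ l * d y (F^[N] x) := by
        have := hF y (F^[N] x)
        simpa [Function.iterate_succ_apply'] using this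
      calc d (F y) (F^[N+1] x) ≤ l * d y (F^[N] x) := this
        _ ≤ d y (F^[N] x) := mul_le_of_le_one_left zero_le hle1
        _ = d (F^[N] x) y := hdsymm _ _
        _ < ε / 2 := hN N le_rfl
    have h2 : d (F^[N+1] x) y < ε / 2 := hN (N+1) (by omega)
    have : ε < ε := by
      calc ε = d (F y) y := rfl
        _ ≤ d (F y) (F^[N+1] x) + d (F^[N+1] x) y := hdtri _ _ _
        _ < ε / 2 + ε / 2 := ENNReal.add_lt_add h1 h2
        _ = ε := ENNReal.add_halves ε
    exact lt_irrefl _ this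
  have hlim0 : ∀ z : Y, (∀ ε : ENNReal, 0 < ε → d z y < ε) → z = y := by
    intro z hz
    rw [← hd0]
    by_contra hne
    exact lt_irrefl _ (hz _ (pos_iff_ne_zero.mpr hne))
  have huniq : ∀ y' : Y, F y' = y' → d (F^[n₀] x) y' < ⊤ → y' = y := by
    intro y' hy' hfin
    apply hlim0
    intro ε hε
    have hfixk : ∀ k : ℕ, F^[k] y' = y' := fun k => Function.iterate_fixed hy' k
    have hhalf : 0 < ε / 2 := ENNReal.div_pos hε.ne' (by norm_num)
    obtain ⟨N, hN⟩ := hy (ε / 2) hhalf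
    have htend2 : Tendsto (fun k : ℕ => l ^ k * d (F^[n₀] x) y') atTop (𝓝 0) := by
      have h0 : Tendsto (fun k : ℕ => l ^ k) atTop (𝓝 0) :=
        ENNReal.tendsto_pow_atTop_nhds_zero_of_lt_one hl1
      simpa using ENNReal.Tendsto.mul_const h0 (Or.inr hfin.ne)
    obtain ⟨k, hk⟩ := (htend2.eventually (gt_mem_nhds hhalf)).exists_forall_of_atTop
    set n := max (n₀ + k) N with hn
    have h1 : d y' (F^[n] x) < ε / 2 := by
      rw [hdsymm]
      have e : F^[n] x = F^[n - n₀] (F^[n₀] x) := by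
        rw [← Function.iterate_add_apply, show n - n₀ + n₀ = n by omega]
      have e2 : F^[n - n₀] y' = y' := hfixk _
      calc d (F^[n] x) y' = d (F^[n - n₀] (F^[n₀] x)) (F^[n - n₀] y') := by rw [e, e2]
        _ ≤ l ^ (n - n₀) * d (F^[n₀] x) y' := hiter _ _ _
        _ < ε / 2 := hk _ (by omega)
    have h2 : d (F^[n] x) y < ε / 2 := hN n (by omega)
    calc d y' y ≤ d y' (F^[n] x) + d (F^[n] x) y := hdtri _ _ _
      _ < ε / 2 + ε / 2 := ENNReal.add_lt_add h1 h2
      _ = ε := ENNReal.add_halves ε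
  have hxyfin : d (F^[n₀] x) y < ⊤ := by
    obtain ⟨N, hN⟩ := hy 1 one_pos
    set n := max n₀ N with hn
    calc d (F^[n₀] x) y ≤ d (F^[n₀] x) (F^[n] x) + d (F^[n] x) y := hdtri _ _ _
      _ ≤ K * l ^ (n₀ - n₀) + 1 := add_le_add (hclose n₀ n le_rfl (le_max_left _ _))
          (hN n (le_max_right _ _)).le
      _ < ⊤ := by
        refine ENNReal.add_lt_top.mpr ⟨?_, ENNReal.one_lt_top⟩
        exact ENNReal.mul_lt_top hKne.lt_top (ENNReal.pow_ne_top hlt).lt_top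
  have hbound : ∀ z : Y, d (F^[n₀] x) z < ⊤ →
      d z y ≤ ENNReal.ofReal (1 / (1 - L)) * d z (F z) := by
    intro z hz
    have hzyfin : d z y ≠ ⊤ := by
      refine ne_top_of_le_ne_top ?_ (hdtri z (F^[n₀] x) y)
      exact (ENNReal.add_lt_top.mpr ⟨by rwa [hdsymm], hxyfin⟩).ne
    have hkey : d z y ≤ d z (F z) + l * d z y := by
      calc d z y ≤ d z (F z) + d (F z) y := hdtri _ _ _
        _ ≤ d z (F z) + l * d z y := by
          gcongr
          have := hF z y
          rwa [hfix] at this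
    have h1 : (1 - l) * d z y ≤ d z (F z) := by
      have hsub : (1 - l) * d z y = 1 * d z y - l * d z y := by
        rw [ENNReal.sub_mul]
        intro _ _
        exact hzyfin
      rw [hsub, one_mul, tsub_le_iff_right]
      exact hkey
    have hof : ENNReal.ofReal (1 / (1 - L)) = (1 - l)⁻¹ := by
      rw [one_div, ENNReal.ofReal_inv_of_pos (by linarith : (0:ℝ) < 1 - L),
        ENNReal.ofReal_sub _ hL0.le, ENNReal.ofReal_one]
    rw [hof]
    rw [← ENNReal.div_eq_inv_mul]
    rw [ENNReal.le_div_iff_mul_le (Or.inl hsub_ne) (Or.inl (by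
      exact (tsub_le_self.trans_lt ENNReal.one_lt_top).ne))]
    rwa [mul_comm]
  refine ⟨fun n hn => ?_, y, hfix, hy, huniq, hbound⟩
  obtain ⟨k, rfl⟩ := Nat.exists_eq_add_of_le hn
  exact lt_of_le_of_lt (hDk k)
    (ENNReal.mul_lt_top (ENNReal.pow_ne_top hlt).lt_top hn₀.lt_top)
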